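/- Coarse correlated price of anarchy of single-item γ-FPA with overbidding: Let γ ∈ (0,1], let n ≥ 2, let v : Fin n → ℝ≥0 be valuations, and consider a single-item γ-approximate first-price auction. Let μ be any coarse correlated equilibrium (overbidding allowed) with all utilities, payments and SW μ-integrable. Then max_i v_i ≤ (1/(γ·(1 − e^{−1/γ})))·E_{b∼μ}[SW(b)]. -/

import Mathlib

open MeasureTheory
open scoped NNReal

/-- Coarse correlated price of anarchy of the single-item γ-approximate first-price
auction with overbidding allowed: in any coarse correlated equilibrium `μ`, the optimal
welfare `max_i v_i` is at most `1/(γ(1 - e^{-1/γ}))` times the expected welfare.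
Here `w b` is the highest bidder (ties to the smallest index), the winner pays some
`p b` with `γ·b_{w b} ≤ p b ≤ b_{w b}`, the winner's utility is `v_{w b} - p b` and all
other utilities are `0`; `SW b = v_{w b}`. -/
theorem cce_poa_single_item_FPA_overbidding
    (γ : ℝ) (hγ0 : 0 < γ) (hγ1 : γ ≤ 1) (n : ℕ) (hn : 2 ≤ n)
    (v : Fin n → ℝ≥0)
    (w : (Fin n → ℝ≥0) → Fin n)
    (hw : ∀ b, (∀ i, b i ≤ b (w b)) ∧ ∀ i, b i = b (w b) → w b ≤ i)
    (p : (Fin n → ℝ≥0) → ℝ)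
    (hp : ∀ b, γ * (b (w b) : ℝ) ≤ p b ∧ p b ≤ (b (w b) : ℝ))
    (u : Fin n → (Fin n → ℝ≥0) → ℝ)
    (hu : ∀ i b, u i b = if i = w b then (v (w b) : ℝ) - p b else 0)
    (μ : Measure (Fin n → ℝ≥0)) [IsProbabilityMeasure μ]
    (hIntu : ∀ i, Integrable (u i) μ) (hIntp : Integrable p μ)
    (hIntSW : Integrable (fun b => (v (w b) : ℝ)) μ)
    (hIntdev : ∀ i (b' : ℝ≥0), Integrable (fun b => u i (Function.update b i b')) μ)
    (hCCE : ∀ i (b' : ℝ≥0),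
      ∫ b, u i (Function.update b i b') ∂μ ≤ ∫ b, u i b ∂μ) :
    ((Finset.univ.sup v : ℝ≥0) : ℝ)
      ≤ (1 / (γ * (1 - Real.exp (-1/γ)))) * ∫ b, (v (w b) : ℝ) ∂μ := by
  classical
  -- notation
  set Vr : ℝ := ((Finset.univ.sup v : ℝ≥0) : ℝ) with hVr
  set c : ℝ := γ * (1 - Real.exp (-1/γ)) with hcdef
  have hexp1 : Real.exp (-1/γ) < 1 := by
    rw [Real.exp_lt_one_iff]
    exact div_neg_of_neg_of_pos (by norm_num) hγ0
  have hexp0 : 0 < Real.exp (-1/γ) := Real.exp_pos _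
  have hc : 0 < c := by
    apply mul_pos hγ0; linarith
  -- it suffices to bound c * Vr
  suffices hmain : c * Vr ≤ ∫ b, (v (w b) : ℝ) ∂μ by
    rw [one_div, ← div_eq_inv_mul, le_div_iff₀ hc]
    linarith [hmain]
  -- an index achieving the max
  have hne : (Finset.univ : Finset (Fin n)).Nonempty :=
    ⟨⟨0, by omega⟩, Finset.mem_univ _⟩
  obtain ⟨i₀, -, hi₀⟩ := Finset.exists_mem_eq_sup (Finset.univ : Finset (Fin n)) hne v
  have hVi₀ : (v i₀ : ℝ) = Vr := by rw [hVr, hi₀]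
  have hVr0 : 0 ≤ Vr := NNReal.coe_nonneg _
  have hSW0 : ∀ b, (0:ℝ) ≤ (v (w b) : ℝ) := fun b => NNReal.coe_nonneg _
  rcases eq_or_lt_of_le hVr0 with hV0 | hVpos
  · -- trivial case: max valuation is 0
    rw [← hV0, mul_zero]
    exact integral_nonneg hSW0
  -- the others' max bid
  set s : Finset (Fin n) := Finset.univ.erase i₀ with hsdef
  have hs : s.Nonempty := by
    rw [← Finset.card_pos, hsdef, Finset.card_erase_of_mem (Finset.mem_univ _),
      Finset.card_univ, Fintype.card_fin]
    omega
  set B : (Fin n → ℝ≥0) → ℝ := fun b => ((s.sup' hs b : ℝ≥0) : ℝ) with hBdef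
  have hBmeas : Measurable B := by
    have h1 : Measurable fun b : Fin n → ℝ≥0 => s.sup' hs b := by
      have : (fun b : Fin n → ℝ≥0 => s.sup' hs b)
          = s.sup' hs (fun j => fun b : Fin n → ℝ≥0 => b j) := by
        funext b; rw [Finset.sup'_apply]
      rw [this]
      exact Finset.measurable_sup' hs (fun j _ => measurable_pi_apply j)
    exact measurable_coe_nnreal_real.comp h1
  have hB0 : ∀ b, 0 ≤ B b := fun b => NNReal.coe_nonneg _
  have hBle : ∀ b, B b ≤ (b (w b) : ℝ) := by
    intro b
    exact_mod_cast NNReal.coe_le_coe.2 (Finset.sup'_le hs b (fun j _ => (hw b).1 j))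
  have hjB : ∀ (b : Fin n → ℝ≥0) (j : Fin n), j ≠ i₀ → (b j : ℝ) ≤ B b := by
    intro b j hj
    exact_mod_cast NNReal.coe_le_coe.2
      (Finset.le_sup' b (Finset.mem_erase.2 ⟨hj, Finset.mem_univ _⟩))
  have hγB : ∀ b, γ * B b ≤ p b := fun b =>
    le_trans (mul_le_mul_of_nonneg_left (hBle b) hγ0.le) (hp b).1
  have hIntB : Integrable B μ := by
    refine Integrable.mono' (hIntp.const_mul γ⁻¹) hBmeas.aestronglyMeasurable
      (Filter.Eventually.of_forall (fun b => ?_))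
    rw [Real.norm_eq_abs, abs_of_nonneg (hB0 b)]
    have := hγB b
    rw [inv_mul_eq_div, le_div_iff₀ hγ0]
    linarith
  -- each bidder's equilibrium utility is nonnegative (deviation to bidding 0)
  have hu_nonneg : ∀ i, 0 ≤ ∫ b, u i b ∂μ := by
    intro i
    refine le_trans (integral_nonneg (fun b => ?_)) (hCCE i 0)
    set b2 := Function.update b i (0:ℝ≥0) with hb2
    rw [hu]
    split
    · next h =>
      have hbw : (b2 (w b2) : ℝ) = 0 := by rw [← h, hb2]; simp
      have h1 := (hp b2).1
      have h2 := (hp b2).2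
      rw [hbw] at h1 h2
      simp only [mul_zero] at h1
      have : p b2 = 0 := le_antisymm h2 h1
      rw [this, sub_zero]
      exact NNReal.coe_nonneg _
    · exact le_rfl
  set U : ℝ := ∫ b, u i₀ b ∂μ with hUdef
  -- equilibrium utility bounded by expected welfare minus expected payment
  have hU_le : U ≤ (∫ b, (v (w b) : ℝ) ∂μ) - ∫ b, p b ∂μ := by
    have hsum : ∀ b, ∑ i, u i b = (v (w b) : ℝ) - p b := by
      intro b
      simp only [hu]
      rw [Finset.sum_ite_eq' Finset.univ (w b) (fun _ => (v (w b) : ℝ) - p b)]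
      simp
    have h1 : ∑ i, ∫ b, u i b ∂μ = (∫ b, (v (w b) : ℝ) ∂μ) - ∫ b, p b ∂μ := by
      rw [← integral_finset_sum _ (fun i _ => hIntu i)]
      rw [show (fun b => ∑ i, u i b) = fun b => (v (w b) : ℝ) - p b from funext hsum]
      exact integral_sub hIntSW hIntp
    rw [← h1, hUdef]
    exact Finset.single_le_sum (fun i _ => hu_nonneg i) (Finset.mem_univ i₀)
  -- key deviation bound
  have hkey : ∀ x : ℝ, 0 < x → x ≤ Vr →
      (Vr - x) * (μ {b | B b < x}).toReal ≤ U := by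
    intro x hx hxV
    set x' : ℝ≥0 := ⟨x, hx.le⟩ with hx'def
    have hx'coe : (x' : ℝ) = x := rfl
    have hSmeas : MeasurableSet {b | B b < x} := measurableSet_lt hBmeas measurable_const
    have hpoint : ∀ b, Set.indicator {b | B b < x} (fun _ => Vr - x) b
        ≤ u i₀ (Function.update b i₀ x') := by
      intro b
      set b2 := Function.update b i₀ x' with hb2
      by_cases hbx : B b < x
      · -- i₀ wins after deviating
        have hwin : w b2 = i₀ := by
          by_contra hne'
          have hup : b2 (w b2) = b (w b2) := Function.update_of_ne hne' _ _
          have h1 : (b2 (w b2) : ℝ) ≤ B b := by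
            rw [hup]; exact hjB b _ hne'
          have h2 : (b2 i₀ : ℝ) ≤ (b2 (w b2) : ℝ) := NNReal.coe_le_coe.2 ((hw b2).1 i₀)
          have h3 : (b2 i₀ : ℝ) = x := by rw [hb2]; simp [hx'coe]
          linarith
        have hub : u i₀ b2 = Vr - p b2 := by
          rw [hu, if_pos hwin.symm, hwin, hVi₀]
        have hpb : p b2 ≤ x := by
          have := (hp b2).2
          rw [hwin] at this
          simpa [hb2, hx'coe] using this
        rw [Set.indicator_of_mem (show b ∈ {b | B b < x} from hbx), hub]
        linarith
      · rw [Set.indicator_of_notMem (show b ∉ {b | B b < x} from hbx)]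
        rw [hu]
        split
        · next h =>
          have hpb : p b2 ≤ x := by
            have := (hp b2).2
            rw [← h] at this
            simpa [hb2, hx'coe] using this
          rw [← h, hVi₀]
          linarith
        · exact le_rfl
    calc (Vr - x) * (μ {b | B b < x}).toReal
        = ∫ b, Set.indicator {b | B b < x} (fun _ => Vr - x) b ∂μ := by
          rw [integral_indicator_const _ hSmeas, smul_eq_mul, mul_comm]
          rfl
      _ ≤ ∫ b, u i₀ (Function.update b i₀ x') ∂μ :=
          integral_mono ((integrable_const _).indicator hSmeas) (hIntdev i₀ x') hpoint
      _ ≤ U := hCCE i₀ x'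
  -- the threshold
  set T : ℝ := (1 - Real.exp (-1/γ)) * Vr with hTdef
  have hT0 : 0 < T := by apply mul_pos; linarith; exact hVpos
  have hTV : T < Vr := by nlinarith
  have hVT : Vr - T = Vr * Real.exp (-1/γ) := by rw [hTdef]; ring
  -- Fubini over the deviation parameter
  set ν : Measure ℝ := volume.restrict (Set.Ioc 0 T) with hνdef
  haveI : IsFiniteMeasure ν := by
    constructor
    rw [hνdef, Measure.restrict_apply_univ, Real.volume_Ioc]
    exact ENNReal.ofReal_lt_top
  set F : ℝ → (Fin n → ℝ≥0) → ℝ := fun x b => if B b < x then 1 else 0 with hFdef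
  have hFmeas : Measurable (Function.uncurry F) := by
    have hset : MeasurableSet {q : ℝ × (Fin n → ℝ≥0) | B q.2 < q.1} :=
      measurableSet_lt (hBmeas.comp measurable_snd) measurable_fst
    exact Measurable.ite hset measurable_const measurable_const
  have hFint : Integrable (Function.uncurry F) (ν.prod μ) := by
    refine Integrable.mono' (integrable_const (1:ℝ)) hFmeas.aestronglyMeasurable
      (Filter.Eventually.of_forall (fun q => ?_))
    simp only [Function.uncurry, hFdef]
    split <;> simp
  have hswap : ∫ x, ∫ b, F x b ∂μ ∂ν = ∫ b, ∫ x, F x b ∂ν ∂μ :=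
    integral_integral_swap hFint
  have hinner1 : ∀ x : ℝ, ∫ b, F x b ∂μ = (μ {b | B b < x}).toReal := by
    intro x
    have : (fun b => F x b) = Set.indicator {b | B b < x} (fun _ => (1:ℝ)) := by
      funext b
      rw [Set.indicator_apply]
      simp [hFdef, Set.mem_setOf_eq]
    rw [this, integral_indicator_const _ (measurableSet_lt hBmeas measurable_const)]
    simp
    rfl
  have hinner2 : ∀ b, ∫ x, F x b ∂ν = max (T - B b) 0 := by
    intro b
    have : (fun x => F x b) = Set.indicator (Set.Ioi (B b)) (fun _ => (1:ℝ)) := by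
      funext x
      rw [Set.indicator_apply]
      simp [hFdef, Set.mem_Ioi]
    rw [this, integral_indicator_const _ measurableSet_Ioi, hνdef,
      measureReal_def, Measure.restrict_apply measurableSet_Ioi]
    rw [Set.inter_comm, Set.Ioc_inter_Ioi, max_eq_right (hB0 b),
      Real.volume_Ioc]
    rw [smul_eq_mul, mul_one, ENNReal.toReal_ofReal']
  -- lower bound on the double integral
  have hI1 : T - ∫ b, B b ∂μ ≤ ∫ b, ∫ x, F x b ∂ν ∂μ := by
    have h1 : ∫ b, (T - B b) ∂μ ≤ ∫ b, ∫ x, F x b ∂ν ∂μ := by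
      refine integral_mono ((integrable_const T).sub hIntB) hFint.integral_prod_right
        (fun b => ?_)
      rw [hinner2]
      exact le_max_left _ _
    have h2 : ∫ b, (T - B b) ∂μ = T - ∫ b, B b ∂μ := by
      rw [integral_sub (integrable_const T) hIntB, integral_const]
      simp
    linarith
  -- upper bound on the double integral
  have hU0 : 0 ≤ U := hu_nonneg i₀
  have hI2 : ∫ x, ∫ b, F x b ∂μ ∂ν ≤ U * (1/γ) := by
    have hPint : Integrable (fun x => ∫ b, F x b ∂μ) ν := hFint.integral_prod_left
    have hgInt : IntegrableOn (fun x => U * (Vr - x)⁻¹) (Set.Ioc 0 T) volume := by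
      refine IntegrableOn.mono_set ?_ Set.Ioc_subset_Icc_self
      apply ContinuousOn.integrableOn_Icc
      apply continuousOn_const.mul
      apply ContinuousOn.inv₀ (continuousOn_const.sub continuousOn_id)
      intro x hx
      have : x ≤ T := hx.2
      have : Vr - x > 0 := by linarith
      exact ne_of_gt this
    have hmono : ∫ x, ∫ b, F x b ∂μ ∂ν ≤ ∫ x in Set.Ioc 0 T, U * (Vr - x)⁻¹ ∂volume := by
      rw [hνdef]
      refine setIntegral_mono_on hPint hgInt measurableSet_Ioc (fun x hx => ?_)
      rw [hinner1]
      have hx0 : 0 < x := hx.1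
      have hxT : x ≤ T := hx.2
      have hVx : 0 < Vr - x := by linarith
      have := hkey x hx0 (by linarith)
      rw [mul_comm U, ← div_eq_inv_mul]
      · rw [le_div_iff₀ hVx]
        linarith [this]
    have hJ : ∫ x in Set.Ioc 0 T, (Vr - x)⁻¹ ∂volume = 1/γ := by
      rw [← intervalIntegral.integral_of_le hT0.le]
      rw [intervalIntegral.integral_comp_sub_left (fun x => x⁻¹) Vr]
      have hVT0 : 0 < Vr - T := by linarith
      rw [sub_zero, integral_inv]
      · rw [hVT]
        have hVne : Vr ≠ 0 := ne_of_gt hVpos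
        have hdiv : Vr / (Vr * Real.exp (-1/γ)) = Real.exp (1/γ) := by
          rw [neg_div, Real.exp_neg]
          field_simp
        rw [hdiv, Real.log_exp]
      · rw [Set.uIcc_of_le (by linarith)]
        intro h
        exact absurd h.1 (by linarith)
    calc ∫ x, ∫ b, F x b ∂μ ∂ν ≤ ∫ x in Set.Ioc 0 T, U * (Vr - x)⁻¹ ∂volume := hmono
      _ = U * ∫ x in Set.Ioc 0 T, (Vr - x)⁻¹ ∂volume := integral_const_mul U _
      _ = U * (1/γ) := by rw [hJ]
  -- combine everything
  have hchain : T - ∫ b, B b ∂μ ≤ U * (1/γ) := by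
    calc T - ∫ b, B b ∂μ ≤ ∫ b, ∫ x, F x b ∂ν ∂μ := hI1
      _ = ∫ x, ∫ b, F x b ∂μ ∂ν := hswap.symm
      _ ≤ U * (1/γ) := hI2
  have hpB : γ * ∫ b, B b ∂μ ≤ ∫ b, p b ∂μ := by
    have h1 : ∫ b, γ * B b ∂μ ≤ ∫ b, p b ∂μ :=
      integral_mono (hIntB.const_mul γ) hIntp hγB
    rwa [integral_const_mul] at h1
  have h1' : γ * T - γ * ∫ b, B b ∂μ ≤ U := by
    have := mul_le_mul_of_nonneg_left hchain hγ0.le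
    have heq : γ * (U * (1/γ)) = U := by field_simp
    rw [heq] at this
    linarith [this, mul_sub γ T (∫ b, B b ∂μ)]
  have hfin : γ * T ≤ ∫ b, (v (w b) : ℝ) ∂μ := by linarith
  have : c * Vr = γ * T := by rw [hcdef, hTdef]; ring
  linarith
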